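/- Every simple graph on a finite vertex type with at most 3 vertices that is an underlying push clique is a complete graph. -/

import Mathlib

/-- A directed graph `A` on `V` is an oriented graph: irreflexive and asymmetric. -/
def IsOriented {V : Type*} (A : V → V → Prop) : Prop :=
  (∀ v, ¬ A v v) ∧ ∀ u v, A u v → ¬ A v u

/-- `u` and `v` are adjacent in `A`. -/
def Adj {V : Type*} (A : V → V → Prop) (u v : V) : Prop :=
  A u v ∨ A v u

/-- The push of `A` by the vertex set `S`: arcs with exactly one endpoint in `S`
are reversed. -/
def push {V : Type*} (S : Set V) (A : V → V → Prop) (u v : V) : Prop :=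
  (Xor' (u ∈ S) (v ∈ S) ∧ A v u) ∨ (¬ Xor' (u ∈ S) (v ∈ S) ∧ A u v)

/-- `u` and `v` agree on `w`. -/
def AgreeOn {V : Type*} (A : V → V → Prop) (u v w : V) : Prop :=
  (A w u ∧ A w v) ∨ (A u w ∧ A v w)

/-- `u` and `v` disagree on `w`. -/
def DisagreeOn {V : Type*} (A : V → V → Prop) (u v w : V) : Prop :=
  (A u w ∧ A w v) ∨ (A w u ∧ A v w)

/-- `u` and `v` are joined by a directed 2-path in `A`. -/
def TwoPath {V : Type*} (A : V → V → Prop) (u v : V) : Prop :=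
  ∃ w, (A u w ∧ A w v) ∨ (A v w ∧ A w u)

/-- `A` is an oriented clique: any two distinct vertices are adjacent or joined
by a directed 2-path. -/
def IsOrientedClique {V : Type*} (A : V → V → Prop) : Prop :=
  ∀ u v, u ≠ v → Adj A u v ∨ TwoPath A u v

/-- `A` is a push clique: every push of `A` is an oriented clique. -/
def IsPushClique {V : Type*} (A : V → V → Prop) : Prop :=
  ∀ S : Set V, IsOrientedClique (push S A)

/-- `A` is an orientation of the simple graph `G`. -/
def IsOrientationOf {V : Type*} (A : V → V → Prop) (G : SimpleGraph V) : Prop :=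
  IsOriented A ∧ ∀ u v, Adj A u v ↔ G.Adj u v

/-- `G` is an underlying push clique. -/
def IsUnderlyingPushClique {V : Type*} (G : SimpleGraph V) : Prop :=
  ∃ A : V → V → Prop, IsOrientationOf A G ∧ IsPushClique A

/-- `G` is an underlying oriented clique. -/
def IsUnderlyingOrientedClique {V : Type*} (G : SimpleGraph V) : Prop :=
  ∃ A : V → V → Prop, IsOrientationOf A G ∧ IsOrientedClique A

theorem stmt_9 {V : Type*} [Fintype V] (hV : Fintype.card V ≤ 3)
    (G : SimpleGraph V) (h : IsUnderlyingPushClique G) : G = ⊤ := by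
  classical
  obtain ⟨A, ⟨⟨hirr, hasym⟩, hadj⟩, hpush⟩ := h
  ext u v
  simp only [SimpleGraph.top_adj]
  constructor
  · exact G.ne_of_adj
  · intro hne
    by_contra hna
    have hAdj : ¬ Adj A u v := fun hx => hna ((hadj u v).1 hx)
    have p0 : ∀ x y, push (∅ : Set V) A x y ↔ A x y := by
      intro x y; simp [push, Xor']
    have h0 := hpush ∅ u v hne
    have h1 := hpush {u} u v hne
    rcases h0 with h0 | ⟨w, hw⟩
    · exact hAdj (by rcases h0 with h | h
                     · exact Or.inl ((p0 _ _).1 h)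
                     · exact Or.inr ((p0 _ _).1 h))
    rw [p0, p0, p0, p0] at hw
    have hwu : w ≠ u := by rintro rfl; rcases hw with ⟨h1, _⟩ | ⟨_, h2⟩
                           exacts [hirr _ h1, hirr _ h2]
    have hwv : w ≠ v := by rintro rfl; rcases hw with ⟨_, h2⟩ | ⟨h1, _⟩
                           exacts [hirr _ h2, hirr _ h1]
    rcases h1 with h1 | ⟨w', hw'⟩
    · refine hAdj ?_
      rcases h1 with h | h
      · rcases h with ⟨_, h⟩ | ⟨hx, h⟩
        · exact Or.inr h
        · exact absurd (by simp [Set.mem_singleton_iff, hne.symm, Xor'] : Xor' (u ∈ ({u} : Set V)) (v ∈ ({u} : Set V))) hx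
      · rcases h with ⟨_, h⟩ | ⟨hx, h⟩
        · exact Or.inl h
        · exact absurd (by simp [Set.mem_singleton_iff, hne.symm, Xor'] : Xor' (v ∈ ({u} : Set V)) (u ∈ ({u} : Set V))) hx
    have hw'u : w' ≠ u := by
      rintro rfl
      rcases hw' with ⟨h1, _⟩ | ⟨_, h2⟩ <;>
        · first
          | (rcases h1 with ⟨_, h⟩ | ⟨_, h⟩; exacts [hirr _ h, hirr _ h])
          | (rcases h2 with ⟨_, h⟩ | ⟨_, h⟩; exacts [hirr _ h, hirr _ h])
    have hw'v : w' ≠ v := by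
      rintro rfl
      rcases hw' with ⟨_, h2⟩ | ⟨h1, _⟩ <;>
        · first
          | (rcases h1 with ⟨_, h⟩ | ⟨_, h⟩; exacts [hirr _ h, hirr _ h])
          | (rcases h2 with ⟨_, h⟩ | ⟨_, h⟩; exacts [hirr _ h, hirr _ h])
    have hww' : w = w' := by
      by_contra hne2
      have hcard : ({u, v, w, w'} : Finset V).card = 4 := by
        rw [Finset.card_insert_of_notMem (by simp [hne, hwu.symm, hw'u.symm]),
            Finset.card_insert_of_notMem (by simp [hwv.symm, hw'v.symm]),
            Finset.card_insert_of_notMem (by simp [hne2]),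
            Finset.card_singleton]
      have := Finset.card_le_univ ({u, v, w, w'} : Finset V)
      rw [hcard] at this
      omega
    subst hww'
    -- unfold push {u} conditions using w ≠ u, v ≠ u
    have e1 : Xor' (u ∈ ({u} : Set V)) (w ∈ ({u} : Set V)) := by
      simp [Set.mem_singleton_iff, hwu, Xor']
    have e2 : ¬ Xor' (w ∈ ({u} : Set V)) (v ∈ ({u} : Set V)) := by
      simp [Set.mem_singleton_iff, hwu, hne.symm, Xor']
    have e3 : ¬ Xor' (v ∈ ({u} : Set V)) (w ∈ ({u} : Set V)) := by
      simp [Set.mem_singleton_iff, hwu, hne.symm, Xor']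
    have e4 : Xor' (w ∈ ({u} : Set V)) (u ∈ ({u} : Set V)) := by
      simp [Set.mem_singleton_iff, hwu, Xor']
    have hw2 : (A w u ∧ A w v) ∨ (A v w ∧ A u w) := by
      rcases hw' with ⟨h1, h2⟩ | ⟨h1, h2⟩
      · rcases h1 with ⟨_, h1⟩ | ⟨hx, _⟩
        · rcases h2 with ⟨hx, _⟩ | ⟨_, h2⟩
          · exact (e2 hx).elim
          · exact Or.inl ⟨h1, h2⟩
        · exact absurd e1 hx
      · rcases h1 with ⟨hx, _⟩ | ⟨_, h1⟩
        · exact (e3 hx).elim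
        · rcases h2 with ⟨_, h2⟩ | ⟨hx, _⟩
          · exact Or.inr ⟨h1, h2⟩
          · exact absurd e4 hx
      
    rcases hw with ⟨ha, hb⟩ | ⟨ha, hb⟩ <;> rcases hw2 with ⟨hc, hd⟩ | ⟨hc, hd⟩
    · exact hasym _ _ ha hc
    · exact hasym _ _ hb hc
    · exact hasym _ _ ha hd
    · exact hasym _ _ hd hb
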